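/- Let S_1,...,S_k be the groups of an optimal 1-dimensional k-means partition of a finite multiset of points contained in [-C, C]. Then the groups are contiguous (each group is the set of points lying in some interval, and the intervals for distinct groups have disjoint interiors), and consequently the sum over l of diam(S_l) is at most 2C, where diam(S) = max_{a,b in S} |a - b|. -/

import Mathlib

open Finset

/-- Mean of the coordinates of `b` assigned to group `l` by the assignment `g`. -/
noncomputable def groupMean {p k : ℕ} (b : Fin p → ℝ) (g : Fin p → Fin k) (l : Fin k) : ℝ :=
  (∑ j ∈ Finset.univ.filter (fun j => g j = l), b j) /
    ((Finset.univ.filter (fun j => g j = l)).card : ℝ)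

/-- Total within-group sum of squared deviations from group means. -/
noncomputable def kmeansCost {p k : ℕ} (b : Fin p → ℝ) (g : Fin p → Fin k) : ℝ :=
  ∑ j, (b j - groupMean b g (g j)) ^ 2

lemma sum_sq_center' {ι : Type*} (s : Finset ι) (hs : s.Nonempty) (f : ι → ℝ) (c : ℝ) :
    ∑ j ∈ s, (f j - c)^2
      = ∑ j ∈ s, (f j - (∑ j ∈ s, f j)/(s.card:ℝ))^2
        + (s.card:ℝ) * ((∑ j ∈ s, f j)/(s.card:ℝ) - c)^2 := by
  set n : ℝ := (s.card : ℝ) with hn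
  have hn0 : n ≠ 0 := by
    simp [hn, Finset.card_ne_zero_of_mem hs.choose_spec]
  set m : ℝ := (∑ j ∈ s, f j) / n with hm
  have hsum : ∑ j ∈ s, f j = n * m := by
    rw [hm]; field_simp
  have key : ∑ j ∈ s, ((f j - c)^2 - (f j - m)^2) = n * (m - c)^2 := by
    calc ∑ j ∈ s, ((f j - c)^2 - (f j - m)^2)
        = ∑ j ∈ s, (2*(m-c)*f j + (c^2 - m^2)) := by
          apply Finset.sum_congr rfl; intro j _; ring
      _ = 2*(m-c)*(∑ j ∈ s, f j) + n*(c^2-m^2) := by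
          rw [Finset.sum_add_distrib, ← Finset.mul_sum, Finset.sum_const, nsmul_eq_mul, hn]
      _ = n * (m - c)^2 := by rw [hsum]; ring
  have := Finset.sum_sub_distrib (s := s) (f := fun j => (f j - c)^2) (g := fun j => (f j - m)^2)
  rw [this] at key
  linarith [key]

lemma cost_split {p k : ℕ} (b : Fin p → ℝ) (g' : Fin p → Fin k)
    (hne : ∀ l, (Finset.univ.filter (fun j => g' j = l)).Nonempty) (c : Fin k → ℝ) :
    ∑ j, (b j - c (g' j))^2
      = kmeansCost b g' + ∑ l, (((Finset.univ.filter (fun j => g' j = l)).card : ℝ)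
          * (groupMean b g' l - c l)^2) := by
  have fib : ∀ (F : Fin p → ℝ),
      ∑ j, F j = ∑ l, ∑ j ∈ Finset.univ.filter (fun j => g' j = l), F j :=
    fun F => (Finset.sum_fiberwise _ _ _).symm
  rw [fib (fun j => (b j - c (g' j))^2), kmeansCost,
    fib (fun j => (b j - groupMean b g' (g' j))^2), ← Finset.sum_add_distrib]
  apply Finset.sum_congr rfl
  intro l _
  have h1 : ∀ j ∈ Finset.univ.filter (fun j => g' j = l),
      (b j - c (g' j))^2 = (b j - c l)^2 := by
    intro j hj; rw [(Finset.mem_filter.mp hj).2]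
  have h2 : ∀ j ∈ Finset.univ.filter (fun j => g' j = l),
      (b j - groupMean b g' (g' j))^2 = (b j - groupMean b g' l)^2 := by
    intro j hj; rw [(Finset.mem_filter.mp hj).2]
  rw [Finset.sum_congr rfl h1, Finset.sum_congr rfl h2]
  simp only [groupMean]
  exact sum_sq_center' _ (hne l) b (c l)

lemma ordered_of_opt {p k : ℕ} (b : Fin p → ℝ) (g : Fin p → Fin k)
    (hsurj : Function.Surjective g)
    (hopt : ∀ g' : Fin p → Fin k, Function.Surjective g' → kmeansCost b g ≤ kmeansCost b g')
    {l l' : Fin k} (hll : l ≠ l') (hμ : groupMean b g l ≤ groupMean b g l')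
    {j1 j2 : Fin p} (h1 : g j1 = l) (h2 : g j2 = l') : b j1 ≤ b j2 := by
  by_contra hlt
  push_neg at hlt
  classical
  set μ := groupMean b g with hμdef
  have hj12 : j1 ≠ j2 := by
    rintro rfl; rw [h1] at h2; exact hll h2
  set g' : Fin p → Fin k := fun j => if j = j1 then l' else if j = j2 then l else g j with hg'
  have hg'j1 : g' j1 = l' := by simp [hg']
  have hg'j2 : g' j2 = l := by simp [hg', hj12.symm]
  have hg'other : ∀ j, j ≠ j1 → j ≠ j2 → g' j = g j := by
    intro j hj hj2; simp [hg', hj, hj2]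
  have hsurj' : Function.Surjective g' := by
    intro m
    by_cases hm1 : m = l
    · exact ⟨j2, by rw [hg'j2, hm1]⟩
    by_cases hm2 : m = l'
    · exact ⟨j1, by rw [hg'j1, hm2]⟩
    obtain ⟨j, hj⟩ := hsurj m
    have hjj1 : j ≠ j1 := by rintro rfl; rw [h1] at hj; exact hm1 hj.symm
    have hjj2 : j ≠ j2 := by rintro rfl; rw [h2] at hj; exact hm2 hj.symm
    exact ⟨j, by rw [hg'other j hjj1 hjj2]; exact hj⟩
  have hne' : ∀ m, (Finset.univ.filter (fun j => g' j = m)).Nonempty := by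
    intro m; obtain ⟨j, hj⟩ := hsurj' m
    exact ⟨j, Finset.mem_filter.mpr ⟨Finset.mem_univ j, hj⟩⟩
  have hne : ∀ m, (Finset.univ.filter (fun j => g j = m)).Nonempty := by
    intro m; obtain ⟨j, hj⟩ := hsurj m
    exact ⟨j, Finset.mem_filter.mpr ⟨Finset.mem_univ j, hj⟩⟩
  -- the fiber of g' over l
  have hj1mem : j1 ∈ Finset.univ.filter (fun j => g j = l) :=
    Finset.mem_filter.mpr ⟨Finset.mem_univ _, h1⟩
  have hj2notmem : j2 ∉ Finset.univ.filter (fun j => g j = l) := by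
    simp only [Finset.mem_filter, Finset.mem_univ, true_and, h2]
    exact fun h => hll h.symm
  have hT : Finset.univ.filter (fun j => g' j = l)
      = insert j2 ((Finset.univ.filter (fun j => g j = l)).erase j1) := by
    ext j
    simp only [Finset.mem_filter, Finset.mem_univ, true_and, Finset.mem_insert,
      Finset.mem_erase]
    by_cases hjj1 : j = j1
    · subst hjj1
      rw [hg'j1]
      exact iff_of_false (fun h => hll h.symm) (by simp [hj12])
    by_cases hjj2 : j = j2
    · subst hjj2
      rw [hg'j2]
      simp
    · rw [hg'other j hjj1 hjj2]
      simp [hjj1, hjj2]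
  have hj2notmem' : j2 ∉ (Finset.univ.filter (fun j => g j = l)).erase j1 :=
    fun h => hj2notmem (Finset.mem_of_mem_erase h)
  set n := (Finset.univ.filter (fun j => g j = l)).card with hncard
  have hnpos : 0 < n := Finset.card_pos.mpr (hne l)
  have hcard : (Finset.univ.filter (fun j => g' j = l)).card = n := by
    rw [hT, Finset.card_insert_of_notMem hj2notmem', Finset.card_erase_of_mem hj1mem]
    omega
  have hsum : ∑ j ∈ Finset.univ.filter (fun j => g' j = l), b j
      = ∑ j ∈ Finset.univ.filter (fun j => g j = l), b j - b j1 + b j2 := by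
    rw [hT, Finset.sum_insert hj2notmem', Finset.sum_erase_eq_sub hj1mem]
    ring
  have hnR : (0:ℝ) < (n:ℝ) := by exact_mod_cast hnpos
  have hmean' : groupMean b g' l - μ l = (b j2 - b j1) / (n:ℝ) := by
    rw [hμdef]
    simp only [groupMean, hcard, hsum, ← hncard]
    field_simp
    ring
  -- compare costs
  have hdiff : ∑ j, ((b j - μ (g' j))^2 - (b j - μ (g j))^2)
      = 2 * (b j1 - b j2) * (μ l - μ l') := by
    rw [← Finset.sum_subset (Finset.subset_univ ({j1, j2} : Finset (Fin p)))
      (by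
        intro j _ hj
        simp only [Finset.mem_insert, Finset.mem_singleton] at hj
        push_neg at hj
        rw [hg'other j hj.1 hj.2]
        ring)]
    rw [Finset.sum_pair hj12, hg'j1, hg'j2, h1, h2]
    ring
  have hsplit := cost_split b g' hne' μ
  have hsingle : ((Finset.univ.filter (fun j => g' j = l)).card : ℝ)
        * (groupMean b g' l - μ l)^2
      ≤ ∑ m, (((Finset.univ.filter (fun j => g' j = m)).card : ℝ)
        * (groupMean b g' m - μ m)^2) :=
    Finset.single_le_sum
      (f := fun m => ((Finset.univ.filter (fun j => g' j = m)).card : ℝ)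
        * (groupMean b g' m - μ m)^2)
      (fun m _ => by positivity) (Finset.mem_univ l)
  have hterm : ((Finset.univ.filter (fun j => g' j = l)).card : ℝ)
      * (groupMean b g' l - μ l)^2 = (b j1 - b j2)^2 / (n:ℝ) := by
    rw [hcard, hmean']
    field_simp
    ring
  have htermpos : (0:ℝ) < (b j1 - b j2)^2 / (n:ℝ) := by
    apply div_pos _ hnR
    have : b j1 - b j2 ≠ 0 := by linarith
    positivity
  have hcost_g : kmeansCost b g = ∑ j, (b j - μ (g j))^2 := rfl
  have hsum_split : ∑ j, (b j - μ (g' j))^2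
      = ∑ j, (b j - μ (g j))^2 + 2 * (b j1 - b j2) * (μ l - μ l') := by
    rw [← hdiff, Finset.sum_sub_distrib]
    ring
  have hmulnonpos : 2 * (b j1 - b j2) * (μ l - μ l') ≤ 0 := by
    have h1' : 0 < b j1 - b j2 := by linarith
    have h2' : μ l - μ l' ≤ 0 := by rw [hμdef]; linarith
    nlinarith
  have hfinal := hopt g' hsurj'
  rw [hcost_g] at hfinal
  rw [hterm] at hsingle
  linarith [hsplit, hsingle, hsum_split, hfinal]

lemma chain_sum : ∀ (n : ℕ) (lo hi : Fin n → ℝ) (A B : ℝ), (∀ i, lo i ≤ hi i) →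
    (∀ i j, i < j → hi i ≤ lo j) → (∀ i, A ≤ lo i) → (∀ i, hi i ≤ B) → A ≤ B →
    ∑ i, (hi i - lo i) ≤ B - A := by
  intro n
  induction n with
  | zero => intro lo hi A B _ _ _ _ hAB; simp; linarith
  | succ m ih =>
    intro lo hi A B h1 h2 hA hB hAB
    rw [Fin.sum_univ_castSucc]
    have hIH := ih (fun i => lo i.castSucc) (fun i => hi i.castSucc) A (lo (Fin.last m))
      (fun i => h1 _) (fun i j hij => h2 _ _ (by simpa using hij))
      (fun i => hA _)
      (fun i => h2 i.castSucc (Fin.last m) (Fin.castSucc_lt_last i))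
      (hA _)
    have := h1 (Fin.last m)
    have := hB (Fin.last m)
    linarith

/-- Fisher contiguity and the diameter bound: the groups of an optimal 1-D
`k`-means partition of points `b ∈ [-C,C]^p` are contiguous — each group lies in an interval
`[lo l, hi l]`, the intervals for distinct groups have disjoint interiors, every within-group
distance is at most the interval length — and consequently the sum over groups of the group
diameters (max minus min of the group) is at most `2C`. -/
theorem stmt19 {p k : ℕ} (C : ℝ) (hC : 0 < C)
    (b : Fin p → ℝ) (hb : ∀ j, b j ∈ Set.Icc (-C) C)
    (g : Fin p → Fin k) (hsurj : Function.Surjective g)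
    (hopt : ∀ g' : Fin p → Fin k, Function.Surjective g' → kmeansCost b g ≤ kmeansCost b g') :
    (∃ lo hi : Fin k → ℝ,
      (∀ l, lo l ≤ hi l) ∧
      (∀ j, b j ∈ Set.Icc (lo (g j)) (hi (g j))) ∧
      (Pairwise fun l l' => Disjoint (Set.Ioo (lo l) (hi l)) (Set.Ioo (lo l') (hi l'))) ∧
      (∀ l j j', g j = l → g j' = l → |b j - b j'| ≤ hi l - lo l) ∧
      (∑ l, (hi l - lo l)) ≤ 2 * C) ∧
    (∑ l, (((Finset.univ.filter (fun j => g j = l)).sup'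
              (by obtain ⟨j, hj⟩ := hsurj l
                  exact ⟨j, Finset.mem_filter.mpr ⟨Finset.mem_univ j, hj⟩⟩) b) -
           ((Finset.univ.filter (fun j => g j = l)).inf'
              (by obtain ⟨j, hj⟩ := hsurj l
                  exact ⟨j, Finset.mem_filter.mpr ⟨Finset.mem_univ j, hj⟩⟩) b)))
      ≤ 2 * C := by
  classical
  have hne : ∀ l, (Finset.univ.filter (fun j => g j = l)).Nonempty := by
    intro l; obtain ⟨j, hj⟩ := hsurj l
    exact ⟨j, Finset.mem_filter.mpr ⟨Finset.mem_univ j, hj⟩⟩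
  set lo : Fin k → ℝ := fun l => (Finset.univ.filter (fun j => g j = l)).inf' (hne l) b with hlo
  set hi : Fin k → ℝ := fun l => (Finset.univ.filter (fun j => g j = l)).sup' (hne l) b with hhi
  have hmem : ∀ j, j ∈ Finset.univ.filter (fun j' => g j' = g j) :=
    fun j => Finset.mem_filter.mpr ⟨Finset.mem_univ _, rfl⟩
  have hlh : ∀ l, lo l ≤ hi l := by
    intro l
    obtain ⟨j, hj⟩ := hne l
    exact le_trans (Finset.inf'_le b hj) (Finset.le_sup' b hj)
  have hin : ∀ j, b j ∈ Set.Icc (lo (g j)) (hi (g j)) :=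
    fun j => ⟨Finset.inf'_le b (hmem j), Finset.le_sup' b (hmem j)⟩
  have hA : ∀ l, -C ≤ lo l := by
    intro l
    apply Finset.le_inf'
    intro j _; exact (hb j).1
  have hB : ∀ l, hi l ≤ C := by
    intro l
    apply Finset.sup'_le
    intro j _; exact (hb j).2
  -- ordering from optimality
  have hord : ∀ l l', l ≠ l' → groupMean b g l ≤ groupMean b g l' → hi l ≤ lo l' := by
    intro l l' hll hμ
    apply Finset.sup'_le
    intro j hj
    apply Finset.le_inf'
    intro j' hj'
    exact ordered_of_opt b g hsurj hopt hll hμ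
      (Finset.mem_filter.mp hj).2 (Finset.mem_filter.mp hj').2
  have hD : ∀ l l', l ≠ l' → hi l ≤ lo l' ∨ hi l' ≤ lo l := by
    intro l l' hll
    rcases le_total (groupMean b g l) (groupMean b g l') with h | h
    · exact Or.inl (hord l l' hll h)
    · exact Or.inr (hord l' l hll.symm h)
  -- sum bound via sorting
  have hsumbound : (∑ l, (hi l - lo l)) ≤ 2 * C := by
    set key : Fin k → ℝ ×ₗ ℝ := fun l => toLex (lo l, hi l) with hkey
    set σ := Tuple.sort key with hσ
    have hmono : Monotone (key ∘ σ) := Tuple.monotone_sort key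
    have hchain : ∀ i j : Fin k, i < j → hi (σ i) ≤ lo (σ j) := by
      intro i j hij
      have hne' : σ i ≠ σ j := fun h => (ne_of_lt hij) (σ.injective h)
      have hk := (Prod.Lex.toLex_le_toLex (x := (lo (σ i), hi (σ i))) (y := (lo (σ j), hi (σ j)))).mp
        (hmono (le_of_lt hij))
      rcases hD (σ i) (σ j) hne' with h | h
      · exact h
      · rcases hk with h1 | ⟨h1, h2⟩
        · exfalso
          have := hlh (σ j)
          simp only at h1
          linarith
        · simp only at h1 h2
          have := hlh (σ j)
          linarith
    have hperm : ∑ l, (hi l - lo l) = ∑ i, (hi (σ i) - lo (σ i)) :=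
      (Equiv.sum_comp σ (fun l => hi l - lo l)).symm
    rw [hperm]
    have := chain_sum k (fun i => lo (σ i)) (fun i => hi (σ i)) (-C) C
      (fun i => hlh _) hchain (fun i => hA _) (fun i => hB _) (by linarith)
    linarith
  refine ⟨⟨lo, hi, hlh, hin, ?_, ?_, hsumbound⟩, hsumbound⟩
  · intro l l' hll
    rcases hD l l' hll with h | h
    · exact Set.disjoint_left.mpr (fun z hz hz' => by
        have := hz.2; have := hz'.1; linarith)
    · exact Set.disjoint_left.mpr (fun z hz hz' => by
        have := hz.1; have := hz'.2; linarith)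
  · intro l j j' hj hj'
    have h1 := hin j
    have h2 := hin j'
    rw [hj] at h1
    rw [hj'] at h2
    rw [abs_sub_le_iff]
    constructor <;> [linarith [h1.2, h2.1]; linarith [h1.1, h2.2]]
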